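/- A permutation τ = x₁x₂…x_j of a finite set of integers avoids both 123 and 132 if and only if for every i ≤ j, the entry x_i is either the greatest or the second greatest element of the set {x_i, x_{i+1}, …, x_j}. -/
import Mathlib


/-- A word `w` (an injective sequence of integers) contains the pattern `τ`
(given by its list of values): some subsequence of `w` is order-isomorphic to `τ`. -/
def ContainsW {j k : ℕ} (w : Fin j → ℤ) (τ : Fin k → ℕ) : Prop :=
  ∃ f : Fin k → Fin j, StrictMono f ∧ ∀ a b : Fin k, τ a < τ b ↔ w (f a) < w (f b)

private lemma key {j : ℕ} (w : Fin j → ℤ) (i l1 l2 : Fin j)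
    (h1 : i < l1) (h2 : l1 < l2) (hw1 : w i < w l1) (hw2 : w i < w l2)
    (hne : w l1 ≠ w l2) :
    ContainsW w ![0,1,2] ∨ ContainsW w ![0,2,1] := by
  rcases lt_or_gt_of_ne hne with hlt | hgt
  · left
    refine ⟨![i, l1, l2], ?_, ?_⟩
    · intro a b hab
      fin_cases a <;> fin_cases b <;> simp_all <;> omega
    · intro a b
      fin_cases a <;> fin_cases b <;> simp <;> omega
  · right
    refine ⟨![i, l1, l2], ?_, ?_⟩
    · intro a b hab
      fin_cases a <;> fin_cases b <;> simp_all <;> omega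
    · intro a b
      fin_cases a <;> fin_cases b <;> simp <;> omega

/-- A word avoids both `123` and `132` iff every entry is either the greatest or
the second greatest of the set of entries from that position onward, i.e. at most
one later entry exceeds it. -/
theorem avoid_123_132_iff (j : ℕ) (w : Fin j → ℤ) (hw : Function.Injective w) :
    (¬ ContainsW w ![0,1,2] ∧ ¬ ContainsW w ![0,2,1]) ↔
      ∀ i : Fin j, {l : Fin j | i ≤ l ∧ w i < w l}.Subsingleton := by
  constructor
  · rintro ⟨h123, h132⟩ i l1 ⟨hle1, hw1⟩ l2 ⟨hle2, hw2⟩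
    by_contra hne
    have hlt1 : i < l1 := lt_of_le_of_ne hle1 (by rintro rfl; exact lt_irrefl _ hw1)
    have hlt2 : i < l2 := lt_of_le_of_ne hle2 (by rintro rfl; exact lt_irrefl _ hw2)
    have hwne : w l1 ≠ w l2 := fun h => hne (hw h)
    rcases lt_or_gt_of_ne hne with h | h
    · rcases key w i l1 l2 hlt1 h hw1 hw2 hwne with hc | hc
      · exact h123 hc
      · exact h132 hc
    · rcases key w i l2 l1 hlt2 h hw2 hw1 hwne.symm with hc | hc
      · exact h123 hc
      · exact h132 hc
  · intro h
    constructor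
    · rintro ⟨f, hf, hiff⟩
      have h01 : w (f 0) < w (f 1) := (hiff 0 1).mp (by simp)
      have h02 : w (f 0) < w (f 2) := (hiff 0 2).mp (by simp)
      have := h (f 0) ⟨(hf (by decide : (0:Fin 3) < 1)).le, h01⟩
        ⟨(hf (by decide : (0:Fin 3) < 2)).le, h02⟩
      exact absurd (hf.injective this) (by decide)
    · rintro ⟨f, hf, hiff⟩
      have h01 : w (f 0) < w (f 1) := (hiff 0 1).mp (by simp)
      have h02 : w (f 0) < w (f 2) := (hiff 0 2).mp (by simp)
      have := h (f 0) ⟨(hf (by decide : (0:Fin 3) < 1)).le, h01⟩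
        ⟨(hf (by decide : (0:Fin 3) < 2)).le, h02⟩
      exact absurd (hf.injective this) (by decide)
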